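/- (Weight-zero case of the stabilization claim in the proof of Proposition prop:modulus-limit, §9.) Let n ≥ 1, M ≥ 1 and r ≥ 0 be integers with r < p^M. Then the image of Fil^p_r W_{n+M}(L) under the M-fold restriction R^M : W_{n+M}(L) → Wₙ(L) equals Wₙ(O); in particular R^M(Fil^p_r W_{n+M}(L)) ⊆ Wₙ(O). -/

import Mathlib

noncomputable section

open scoped Classical

/-- A discretely valued field: a field `L` together with a normalized additive valuation
`v : L → ℤ ∪ {∞}` and a uniformizer `z` (so `v z = 1`).  The valuation ring is
`O = {a : L | 0 ≤ v a}`, with maximal ideal `𝔪 = {a : L | 1 ≤ v a}`. -/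
structure DVField (L : Type) [Field L] : Type where
  v : L → WithTop ℤ
  z : L
  v_top : ∀ a : L, v a = ⊤ ↔ a = 0
  v_mul : ∀ a b : L, v (a * b) = v a + v b
  v_add : ∀ a b : L, min (v a) (v b) ≤ v (a + b)
  v_z : v z = 1

namespace DVField

variable {L : Type} [Field L]

/-- `Wₙ(O) ⊆ Wₙ(L)`: the truncated Witt vectors all of whose components are integral. -/
def WO (D : DVField L) (p n : ℕ) : Set (TruncatedWittVector p n L) :=
  {x | ∀ i : Fin n, 0 ≤ D.v (x.coeff i)}

/-- The Brylinski–Kato filtration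
`fil^log_r Wₙ(L) = {(a₀, …, a_{n-1}) | p^{n-1-i} · v(aᵢ) ≥ -r for all i}`. -/
def filLog (D : DVField L) (p r n : ℕ) : Set (TruncatedWittVector p n L) :=
  {x | ∀ i : Fin n, (↑(-(r : ℤ)) : WithTop ℤ) ≤ p ^ (n - 1 - (i : ℕ)) • D.v (x.coeff i)}

end DVField

/-- The Verschiebung `V : Wₙ(L) → W_{n+1}(L)`, shifting components. -/
def wV {p : ℕ} {L : Type} [Field L] {n : ℕ} (x : TruncatedWittVector p n L) :
    TruncatedWittVector p (n + 1) L :=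
  TruncatedWittVector.mk p fun i =>
    if h : (i : ℕ) = 0 then 0 else x.coeff ⟨(i : ℕ) - 1, by have := i.isLt; omega⟩

/-- The iterated Verschiebung `V^{n-m} : W_m(L) → Wₙ(L)` (for `m ≤ n`), given by shifting
components by `n - m`. -/
def wVit {p : ℕ} {L : Type} [Field L] {m n : ℕ} (x : TruncatedWittVector p m L) :
    TruncatedWittVector p n L :=
  TruncatedWittVector.mk p fun i =>
    if h : n - m ≤ (i : ℕ) ∧ (i : ℕ) - (n - m) < m then x.coeff ⟨(i : ℕ) - (n - m), h.2⟩ else 0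

/-- The restriction `R : W_{n+1}(L) → Wₙ(L)`, dropping the last component. -/
def wR {p : ℕ} {L : Type} [Field L] {n : ℕ} (x : TruncatedWittVector p (n + 1) L) :
    TruncatedWittVector p n L :=
  TruncatedWittVector.mk p fun i => x.coeff i.castSucc

/-- The iterated restriction `R^{m-n} : W_m(L) → Wₙ(L)` (for `n ≤ m`), keeping the first `n`
components. -/
def wRes {p : ℕ} {L : Type} [Field L] {m n : ℕ} (x : TruncatedWittVector p m L) :
    TruncatedWittVector p n L :=
  TruncatedWittVector.mk p fun i => if h : (i : ℕ) < m then x.coeff ⟨(i : ℕ), h⟩ else 0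

/-- The Frobenius `F : W_{n+1}(L) → Wₙ(L)` in characteristic `p`:
componentwise `p`-th power followed by restriction. -/
def wF {p : ℕ} {L : Type} [Field L] {n : ℕ} (x : TruncatedWittVector p (n + 1) L) :
    TruncatedWittVector p n L :=
  TruncatedWittVector.mk p fun i => x.coeff i.castSucc ^ p

/-- The Teichmüller lift `[a] = (a, 0, …, 0)`. -/
def wT (p : ℕ) {L : Type} [Field L] (n : ℕ) (a : L) : TruncatedWittVector p n L :=
  TruncatedWittVector.mk p fun i => if (i : ℕ) = 0 then a else 0

/-- The map `p̲ : Wₙ(L) → W_{n+1}(L)`: lift to length `n+1` (by appending a zero component)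
and multiply by `p`. -/
def wP {p : ℕ} [Fact p.Prime] {L : Type} [Field L] {n : ℕ} (x : TruncatedWittVector p n L) :
    TruncatedWittVector p (n + 1) L :=
  p • (wRes x : TruncatedWittVector p (n + 1) L)

namespace DVField

variable {L : Type} [Field L]

/-- The Kato–Matsuda filtration
`fil_r Wₙ(L) = fil^log_{r-1} Wₙ(L) + V^{n-m}(fil^log_r W_m(L))` where `m = min(v_p(r), n)`,
and `fil_0 Wₙ(L) = Wₙ(O)`. -/
def filKM (D : DVField L) (p : ℕ) [Fact p.Prime] (r n : ℕ) :
    Set (TruncatedWittVector p n L) :=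
  if r = 0 then D.WO p n
  else {x | ∃ a ∈ D.filLog p (r - 1) n,
    ∃ b ∈ D.filLog p r (min (padicValNat p r) n), x = a + wVit b}

/-- The `p`-saturation `Fil^p_r Wₙ(L) = Σ_{s=0}^{n-1} p^s · fil_{r·p^s} Wₙ(L)`. -/
def FilP (D : DVField L) (p : ℕ) [Fact p.Prime] (r n : ℕ) :
    Set (TruncatedWittVector p n L) :=
  {x | ∃ f : Fin n → TruncatedWittVector p n L,
      (∀ s : Fin n, f s ∈ D.filKM p (r * p ^ (s : ℕ)) n) ∧
      x = ∑ s : Fin n, p ^ (s : ℕ) • f s}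

end DVField

section Aux

variable {L : Type} [Field L]

lemma DVField.v_zero (D : DVField L) : D.v 0 = ⊤ := (D.v_top 0).2 rfl

lemma DVField.v_one (D : DVField L) : D.v 1 = 0 := by
  have h := D.v_mul 1 1
  rw [one_mul] at h
  cases hv : D.v 1 with
  | top => exact absurd ((D.v_top 1).1 hv) one_ne_zero
  | coe c =>
    rw [hv, ← WithTop.coe_add] at h
    have : c = c + c := WithTop.coe_inj.mp h
    have : c = 0 := by omega
    rw [this]; rfl

lemma DVField.v_neg (D : DVField L) (a : L) : D.v (-a) = D.v a := by
  have hneg1 : D.v (-1 : L) = 0 := by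
    have h := D.v_mul (-1 : L) (-1 : L)
    rw [neg_mul_neg, one_mul, D.v_one] at h
    cases hv : D.v (-1 : L) with
    | top => exact absurd ((D.v_top (-1 : L)).1 hv) (by norm_num)
    | coe c =>
      rw [hv, ← WithTop.coe_add] at h
      have h2 : (0 : ℤ) = c + c := by exact_mod_cast h
      have : c = 0 := by omega
      rw [this]; rfl
  have : (-1 : L) * a = -a := by ring
  rw [← this, D.v_mul, hneg1, zero_add]

/-- The valuation ring `O` as a subring of `L`. -/
def DVField.Ov (D : DVField L) : Subring L where
  carrier := {a | 0 ≤ D.v a}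
  zero_mem' := by simp only [Set.mem_setOf_eq, D.v_zero]; exact le_top
  one_mem' := by simp only [Set.mem_setOf_eq, D.v_one]; exact le_refl 0
  add_mem' := by
    intro a b ha hb
    simp only [Set.mem_setOf_eq] at *
    exact le_trans (le_min ha hb) (D.v_add a b)
  mul_mem' := by
    intro a b ha hb
    simp only [Set.mem_setOf_eq] at *
    rw [D.v_mul]; exact add_nonneg ha hb
  neg_mem' := by
    intro a ha
    simp only [Set.mem_setOf_eq] at *
    rw [D.v_neg]; exact ha

lemma DVField.v_pow_nonneg (D : DVField L) {a : L} (h : 0 ≤ D.v a) (k : ℕ) :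
    0 ≤ D.v (a ^ k) := by
  induction k with
  | zero => rw [pow_zero, D.v_one]
  | succ k ih => rw [pow_succ, D.v_mul]; exact add_nonneg ih h

lemma nsmul_coe_withTop (k : ℕ) (c : ℤ) :
    (k • (c : WithTop ℤ)) = (((k : ℤ) * c : ℤ) : WithTop ℤ) := by
  induction k with
  | zero => simp
  | succ k ih =>
    rw [succ_nsmul, ih, ← WithTop.coe_add]
    congr 1
    push_cast
    ring

lemma DVField.v_nonneg_of_bound (D : DVField L) {a : L} {R k : ℕ}
    (h : (↑(-(R : ℤ)) : WithTop ℤ) ≤ k • D.v a) (hRk : R < k) : 0 ≤ D.v a := by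
  cases hv : D.v a with
  | top => exact le_top
  | coe c =>
    rw [hv, nsmul_coe_withTop, WithTop.coe_le_coe] at h
    by_contra hc
    push_neg at hc
    have hc2 : c < 0 := by exact_mod_cast hc
    have hc' : c ≤ -1 := by omega
    have h1 : (k : ℤ) * c ≤ (k : ℤ) * (-1) :=
      mul_le_mul_of_nonneg_left hc' (by positivity)
    have : (k : ℤ) ≤ R := by omega
    omega

namespace DVField

variable {p : ℕ} [Fact p.Prime]

lemma WO_zero (D : DVField L) (n : ℕ) : (0 : TruncatedWittVector p n L) ∈ D.WO p n := by
  intro i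
  rw [TruncatedWittVector.coeff_zero, D.v_zero]
  exact le_top

lemma WO_lift (D : DVField L) {n : ℕ} (x : TruncatedWittVector p n L) (hx : x ∈ D.WO p n) :
    ∃ X : WittVector p D.Ov,
      (WittVector.truncate n) ((WittVector.map D.Ov.subtype) X) = x := by
  refine ⟨WittVector.mk p (fun i => if h : i < n then ⟨x.coeff ⟨i, h⟩, hx ⟨i, h⟩⟩ else 0), ?_⟩
  apply TruncatedWittVector.ext
  intro i
  rw [WittVector.coeff_truncate, WittVector.map_coeff]
  have : (WittVector.mk p (fun j => if h : j < n then
      (⟨x.coeff ⟨j, h⟩, hx ⟨j, h⟩⟩ : D.Ov) else 0)).coeff (i : ℕ) =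
      if h : (i : ℕ) < n then (⟨x.coeff ⟨(i : ℕ), h⟩, hx ⟨(i : ℕ), h⟩⟩ : D.Ov) else 0 := rfl
  rw [this, dif_pos i.isLt]
  rfl

lemma WO_of_lift (D : DVField L) {n : ℕ} (X : WittVector p D.Ov) :
    (WittVector.truncate n) ((WittVector.map D.Ov.subtype) X) ∈ D.WO p n := by
  intro i
  rw [WittVector.coeff_truncate, WittVector.map_coeff]
  exact (X.coeff (i : ℕ)).2

lemma WO_add (D : DVField L) {n : ℕ} {x y : TruncatedWittVector p n L}
    (hx : x ∈ D.WO p n) (hy : y ∈ D.WO p n) : x + y ∈ D.WO p n := by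
  obtain ⟨X, hX⟩ := D.WO_lift x hx
  obtain ⟨Y, hY⟩ := D.WO_lift y hy
  rw [← hX, ← hY, ← map_add, ← map_add]
  exact D.WO_of_lift _

end DVField

lemma DVField.filLog_of_nonneg (D : DVField L) {p R m : ℕ} {x : TruncatedWittVector p m L}
    (h : ∀ i : Fin m, 0 ≤ D.v (x.coeff i)) : x ∈ D.filLog p R m := by
  intro i
  refine le_trans ?_ (nsmul_nonneg (h i) _)
  exact_mod_cast neg_nonpos.mpr (Int.natCast_nonneg R)

lemma wRes_eq_truncate {p : ℕ} [Fact p.Prime] {m n : ℕ} (h : n ≤ m) (x : TruncatedWittVector p m L) :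
    (wRes x : TruncatedWittVector p n L) = TruncatedWittVector.truncate h x := by
  apply TruncatedWittVector.ext
  intro i
  rw [wRes, TruncatedWittVector.coeff_mk, TruncatedWittVector.coeff_truncate,
    dif_pos (lt_of_lt_of_le i.isLt h)]
  rfl

lemma mul_p_pow_coeff {p : ℕ} [Fact p.Prime] [CharP L p] (Y : WittVector p L) (s : ℕ) :
    ∀ j, (Y * (p : WittVector p L) ^ s).coeff j =
      if s ≤ j then Y.coeff (j - s) ^ p ^ s else 0 := by
  induction s with
  | zero => intro j; simp
  | succ s ih =>
    intro j
    rw [pow_succ, ← mul_assoc]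
    cases j with
    | zero =>
      rw [WittVector.mul_charP_coeff_zero, if_neg (by omega)]
    | succ k =>
      rw [WittVector.mul_charP_coeff_succ, ih k]
      by_cases h : s ≤ k
      · rw [if_pos h, if_pos (by omega), ← pow_mul, ← pow_succ]
        congr 2
        omega
      · rw [if_neg h, if_neg (by omega), zero_pow (Nat.Prime.ne_zero Fact.out)]

lemma wRes_nsmul_coeff {p : ℕ} [Fact p.Prime] [CharP L p] {m n : ℕ} (h : n ≤ m)
    (y : TruncatedWittVector p m L) (s : ℕ) (i : Fin n) :
    (wRes ((p : ℕ) ^ s • y) : TruncatedWittVector p n L).coeff i =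
      if hs : s ≤ (i : ℕ) then y.coeff ⟨(i : ℕ) - s, by omega⟩ ^ p ^ s else 0 := by
  obtain ⟨Y, rfl⟩ := WittVector.truncate_surjective (p := p) m L y
  have h1 : (p : ℕ) ^ s • (WittVector.truncate m Y : TruncatedWittVector p m L) =
      WittVector.truncate m ((p : ℕ) ^ s • Y) := (map_nsmul _ _ _).symm
  have h2 : ((p : ℕ) ^ s • Y) = Y * (p : WittVector p L) ^ s := by
    rw [nsmul_eq_mul, Nat.cast_pow, mul_comm]
  rw [h1, h2, wRes_eq_truncate h, TruncatedWittVector.coeff_truncate,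
    WittVector.coeff_truncate, mul_p_pow_coeff]
  simp only [Fin.coe_castLE]
  by_cases hs : s ≤ (i : ℕ)
  · rw [if_pos hs, dif_pos hs, WittVector.coeff_truncate]
  · rw [if_neg hs, dif_neg hs]

lemma wVit_zero {p : ℕ} [Fact p.Prime] {m n : ℕ} :
    (wVit (0 : TruncatedWittVector p m L) : TruncatedWittVector p n L) = 0 := by
  apply TruncatedWittVector.ext
  intro i
  rw [wVit, TruncatedWittVector.coeff_mk, TruncatedWittVector.coeff_zero]
  split <;> simp

lemma term_mem {p : ℕ} [Fact p.Prime] [CharP L p] (D : DVField L) {n M r : ℕ}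
    (hn : 1 ≤ n) (hM : 1 ≤ M) (hr : r < p ^ M) (s : ℕ)
    (f : TruncatedWittVector p (n + M) L) (hf : f ∈ D.filKM p (r * p ^ s) (n + M)) :
    (wRes ((p : ℕ) ^ s • f) : TruncatedWittVector p n L) ∈ D.WO p n := by
  have hnm : n ≤ n + M := Nat.le_add_right n M
  have hp1 : 1 < p := (Fact.out : p.Prime).one_lt
  by_cases hr0 : r = 0
  · -- then r * p^s = 0 and f ∈ WO
    rw [DVField.filKM, if_pos (by simp [hr0])] at hf
    intro i
    rw [wRes_nsmul_coeff hnm]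
    split
    · exact D.v_pow_nonneg (hf _) _
    · rw [D.v_zero]; exact le_top
  · have hrs0 : r * p ^ s ≠ 0 := by positivity
    rw [DVField.filKM, if_neg hrs0] at hf
    obtain ⟨a, ha, b, hb, rfl⟩ := hf
    have hsum : (wRes ((p : ℕ) ^ s • (a + (wVit b : TruncatedWittVector p (n + M) L))) :
        TruncatedWittVector p n L) =
        (wRes ((p : ℕ) ^ s • a) : TruncatedWittVector p n L) +
        (wRes ((p : ℕ) ^ s • (wVit b : TruncatedWittVector p (n + M) L)) :
          TruncatedWittVector p n L) := by
      simp only [wRes_eq_truncate hnm, smul_add, map_add]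
    rw [hsum]
    apply D.WO_add
    · -- the filLog part
      intro i
      rw [wRes_nsmul_coeff hnm]
      split
      · rename_i hs
        apply D.v_pow_nonneg
        set e : ℕ := (n + M) - 1 - ((i : ℕ) - s) with he
        refine D.v_nonneg_of_bound (ha ⟨(i : ℕ) - s, by omega⟩) (k := p ^ e) ?_
        have hMse : M + s ≤ e := by
          have := i.isLt
          omega
        have h1 : r * p ^ s < p ^ (M + s) := by
          rw [pow_add]
          exact (Nat.mul_lt_mul_right (Nat.pow_pos (n := s) (by omega))).mpr hr
        have h2 : p ^ (M + s) ≤ p ^ e := Nat.pow_le_pow_right (by omega) hMse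
        omega
      · rw [D.v_zero]; exact le_top
    · -- the Verschiebung part vanishes after restriction
      intro i
      rw [wRes_nsmul_coeff hnm]
      split
      · rename_i hs
        have hval : padicValNat p (r * p ^ s) = padicValNat p r + s := by
          rw [padicValNat.mul hr0 (by positivity), padicValNat.prime_pow]
        have hvr : padicValNat p r < M := by
          have hdvd : p ^ padicValNat p r ∣ r := pow_padicValNat_dvd
          have hle : p ^ padicValNat p r ≤ r := Nat.le_of_dvd (Nat.pos_of_ne_zero hr0) hdvd
          have : p ^ padicValNat p r < p ^ M := lt_of_le_of_lt hle hr
          exact (Nat.pow_lt_pow_iff_right hp1).mp this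
        have hcoeff : (wVit b : TruncatedWittVector p (n + M) L).coeff
            ⟨(i : ℕ) - s, by omega⟩ = 0 := by
          rw [wVit, TruncatedWittVector.coeff_mk]
          rw [dif_neg]
          intro hcon
          have hi := i.isLt
          have hcon1 : n + M - min (padicValNat p (r * p ^ s)) (n + M) ≤ (i : ℕ) - s :=
            hcon.1
          omega
        rw [hcoeff, zero_pow (by positivity : p ^ s ≠ 0), D.v_zero]
        exact le_top
      · rw [D.v_zero]; exact le_top

end Aux

/-- (Weight-zero stabilization.)  Let `n ≥ 1`, `M ≥ 1` and `r ≥ 0` with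
`r < p^M`.  Then the image of `Fil^p_r W_{n+M}(L)` under the `M`-fold restriction
`R^M : W_{n+M}(L) → Wₙ(L)` equals `Wₙ(O)`. -/
theorem statement19 (p : ℕ) [Fact p.Prime] (L : Type) [Field L] [CharP L p]
    (D : DVField L) (n M r : ℕ) (hn : 1 ≤ n) (hM : 1 ≤ M) (hr : r < p ^ M) :
    (fun x : TruncatedWittVector p (n + M) L => (wRes x : TruncatedWittVector p n L)) ''
        D.FilP p r (n + M) = D.WO p n := by
  have hnm : n ≤ n + M := Nat.le_add_right n M
  haveI : NeZero (n + M) := ⟨by omega⟩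
  apply Set.Subset.antisymm
  · rintro x ⟨w, ⟨f, hf, rfl⟩, rfl⟩
    simp only []
    have hsum : (wRes (∑ s : Fin (n + M), p ^ (s : ℕ) • f s) :
        TruncatedWittVector p n L) =
        ∑ s : Fin (n + M), (wRes (p ^ (s : ℕ) • f s) : TruncatedWittVector p n L) := by
      simp only [wRes_eq_truncate hnm]
      exact map_sum _ _ _
    rw [hsum]
    refine Finset.sum_induction _ (· ∈ D.WO p n)
      (fun a b hab hb => D.WO_add hab hb) (D.WO_zero n) ?_
    intro s _
    exact term_mem D hn hM hr (s : ℕ) (f s) (hf s)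
  · intro x hx
    set y : TruncatedWittVector p (n + M) L := (wRes x : TruncatedWittVector p (n + M) L)
      with hy
    have hycoeff : ∀ j : Fin (n + M),
        y.coeff j = if h : (j : ℕ) < n then x.coeff ⟨(j : ℕ), h⟩ else 0 := by
      intro j
      rw [hy, wRes, TruncatedWittVector.coeff_mk]
    have hyv : ∀ j : Fin (n + M), 0 ≤ D.v (y.coeff j) := by
      intro j
      rw [hycoeff j]
      split
      · exact hx _
      · rw [D.v_zero]; exact le_top
    refine ⟨y, ?_, ?_⟩
    · -- y ∈ FilP
      refine ⟨fun s => if s = 0 then y else 0, ?_, ?_⟩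
      · intro s
        dsimp only
        by_cases hs : s = 0
        · subst hs
          rw [if_pos rfl]
          simp only [Fin.val_zero, pow_zero, mul_one]
          by_cases hr0 : r = 0
          · rw [DVField.filKM, if_pos hr0]
            exact hyv
          · rw [DVField.filKM, if_neg hr0]
            exact ⟨y, D.filLog_of_nonneg hyv, 0,
              D.filLog_of_nonneg (fun i => by
                rw [TruncatedWittVector.coeff_zero, D.v_zero]; exact le_top),
              by rw [wVit_zero, add_zero]⟩
        · rw [if_neg hs]
          by_cases hrs : r * p ^ (s : ℕ) = 0
          · rw [DVField.filKM, if_pos hrs]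
            exact D.WO_zero (n + M)
          · rw [DVField.filKM, if_neg hrs]
            exact ⟨0, D.filLog_of_nonneg (fun i => by
                rw [TruncatedWittVector.coeff_zero, D.v_zero]; exact le_top), 0,
              D.filLog_of_nonneg (fun i => by
                rw [TruncatedWittVector.coeff_zero, D.v_zero]; exact le_top),
              by rw [wVit_zero, add_zero]⟩
      · rw [Fintype.sum_eq_single (0 : Fin (n + M))
          (fun b hb => by dsimp only; rw [if_neg hb, smul_zero])]
        dsimp only
        rw [if_pos rfl, Fin.val_zero, pow_zero, one_smul]
    · -- wRes y = x
      apply TruncatedWittVector.ext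
      intro i
      have h1 : (wRes y : TruncatedWittVector p n L).coeff i =
          y.coeff ⟨(i : ℕ), by omega⟩ := by
        rw [wRes, TruncatedWittVector.coeff_mk, dif_pos (by omega : (i : ℕ) < n + M)]
      rw [h1, hycoeff ⟨(i : ℕ), by omega⟩, dif_pos i.isLt]
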